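/- arXiv:2011.07258 — 3 statements merged into one kernel-verified Lean document; each statement's English description precedes it below -/
import Mathlib

section
/- There exist constants C > 0, λ > 0 and δ₀ > 0, depending only on ρ₊, a, b, μ and p but independent of φ₋ − φ₊, such that if |φ₋ − φ₊| ≤ δ₀, then the classical solution (ρ̄, φ̄) of the stationary problem is twice differentiable and satisfies |ρ̄'(x)| + |ρ̄''(x)| + |φ̄'(x)| + |φ̄''(x)| + |ρ̄(x) − ρ₊| + |φ̄(x) − φ₊| ≤ C·e^{−λ·x}·|φ₋ − φ₊| for all x ≥ 0. -/
open MeasureTheory Set Filter Topology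

noncomputable section

/-- `F(s) = ∫_{ρ₊}^s p'(τ)/(μ τ) dτ`. -/
def Ffun (p : ℝ → ℝ) (μ ρp s : ℝ) : ℝ :=
  ∫ τ in ρp..s, deriv p τ / (μ * τ)

/-- The structural condition `φ₋ - φ₊ + ∫₀^{ρ₊} p'(s)/(μ s) ds > 0`
(automatically satisfied when the integral diverges). -/
def CondPlus (p : ℝ → ℝ) (μ ρp φp φm : ℝ) : Prop :=
  ¬ IntegrableOn (fun s => deriv p s / (μ * s)) (Set.Ioo 0 ρp) ∨
    0 < φm - φp + ∫ s in Set.Ioo 0 ρp, deriv p s / (μ * s)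

/-- Classical solution of the stationary problem on `ℝ₊ = (0,∞)`. -/
def IsStatSol (p : ℝ → ℝ) (μ a b ρp φp φm : ℝ) (ρb φb : ℝ → ℝ) : Prop :=
  ContDiffOn ℝ 1 ρb (Set.Ici 0) ∧
  ContDiffOn ℝ 2 φb (Set.Ici 0) ∧
  (∀ x : ℝ, 0 ≤ x → 0 < ρb x) ∧
  (∀ x : ℝ, 0 < x → deriv (fun y => p (ρb y)) x = μ * ρb x * deriv φb x) ∧
  (∀ x : ℝ, 0 < x → deriv (deriv φb) x + a * ρb x - b * φb x = 0) ∧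
  φb 0 = φm ∧
  Tendsto ρb atTop (nhds ρp) ∧
  Tendsto φb atTop (nhds φp)

section Auxiliary

lemma max_principle {f f' ψ : ℝ → ℝ} {l : ℝ}
    (hfc : ContinuousOn f (Set.Ici 0))
    (hf' : ∀ x, 0 < x → HasDerivAt f (f' x) x)
    (hf'c : ContinuousOn f' (Set.Ioi 0))
    (hf'' : ∀ x, 0 < x → HasDerivAt f' (ψ x) x)
    (hψc : ContinuousOn ψ (Set.Ioi 0))
    (hsign : ∀ x, 0 < x → 0 < f x → 0 < ψ x)
    (h0 : f 0 ≤ 0) (hl : l ≤ 0) (htop : Tendsto f atTop (nhds l)) :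
    ∀ x, 0 ≤ x → f x ≤ 0 := by
  by_contra hcon
  push_neg at hcon
  obtain ⟨x₁, hx₁0, hx₁⟩ := hcon
  have hx₁pos : 0 < x₁ := by
    rcases eq_or_lt_of_le hx₁0 with h | h
    · exfalso; rw [← h] at hx₁; linarith
    · exact h
  have hev : ∀ᶠ y in atTop, f y < f x₁ :=
    htop.eventually_lt_const (by linarith)
  obtain ⟨X₀, hX₀⟩ := hev.exists_forall_of_atTop
  set X : ℝ := max X₀ x₁ + 1 with hX
  have hx₁X : x₁ < X := by have := le_max_right X₀ x₁; simp only [hX]; linarith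
  have hfX : f X < f x₁ := hX₀ X (by have := le_max_left X₀ x₁; simp only [hX]; linarith)
  have hXpos : 0 < X := lt_trans hx₁pos hx₁X
  obtain ⟨x₀, hx₀mem, hx₀max⟩ :=
    (isCompact_Icc (a := (0:ℝ)) (b := X)).exists_isMaxOn (nonempty_Icc.2 hXpos.le)
      (hfc.mono (Icc_subset_Ici_self))
  have hx₁mem : x₁ ∈ Icc (0:ℝ) X := ⟨hx₁0, hx₁X.le⟩
  have hfx₀ : f x₁ ≤ f x₀ := hx₀max hx₁mem
  have hfx₀pos : 0 < f x₀ := lt_of_lt_of_le hx₁ hfx₀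
  have hx₀pos : 0 < x₀ := by
    rcases eq_or_lt_of_le hx₀mem.1 with h | h
    · exfalso; rw [← h] at hfx₀pos; linarith
    · exact h
  have hx₀X : x₀ < X := by
    rcases eq_or_lt_of_le hx₀mem.2 with h | h
    · exfalso; rw [h] at hfx₀pos hfx₀; linarith
    · exact h
  -- local max
  have hloc : IsLocalMax f x₀ := by
    have : Icc (0:ℝ) X ∈ 𝓝 x₀ := Icc_mem_nhds hx₀pos hx₀X
    exact Filter.eventually_of_mem this (fun y hy => hx₀max hy)
  have hderiv0 : f' x₀ = 0 := by
    have := hloc.deriv_eq_zero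
    rwa [(hf' x₀ hx₀pos).deriv] at this
  -- positivity of ψ near x₀
  have hψx₀ : 0 < ψ x₀ := hsign x₀ hx₀pos hfx₀pos
  have hψcont : ContinuousAt ψ x₀ := hψc.continuousAt (isOpen_Ioi.mem_nhds hx₀pos)
  have hevψ : ∀ᶠ y in 𝓝 x₀, 0 < ψ y := hψcont.eventually (eventually_gt_nhds hψx₀)
  obtain ⟨ε, hεpos, hε⟩ := Metric.eventually_nhds_iff.1 hevψ
  set η : ℝ := min (ε / 2) ((X - x₀) / 2) with hη
  have hηpos : 0 < η := lt_min (by linarith) (by linarith)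
  have hηε : η < ε := lt_of_le_of_lt (min_le_left _ _) (by linarith)
  have hηX : x₀ + η ≤ X := by
    have : η ≤ (X - x₀) / 2 := min_le_right _ _
    linarith
  have hIcc : Icc x₀ (x₀ + η) ⊆ Ioi (0:ℝ) := fun y hy => lt_of_lt_of_le hx₀pos hy.1
  have hψpos : ∀ y ∈ Icc x₀ (x₀ + η), 0 < ψ y := by
    intro y hy
    apply hε
    rw [Real.dist_eq, abs_lt]
    constructor <;> [linarith [hy.1]; linarith [hy.2]]
  -- f' strictly increasing on Icc x₀ (x₀+η)
  have hmono' : StrictMonoOn f' (Icc x₀ (x₀ + η)) := by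
    apply strictMonoOn_of_deriv_pos (convex_Icc _ _) (hf'c.mono hIcc)
    intro y hy
    rw [interior_Icc] at hy
    have hy0 : 0 < y := lt_trans hx₀pos hy.1
    rw [(hf'' y hy0).deriv]
    exact hψpos y ⟨hy.1.le, hy.2.le⟩
  have hf'pos : ∀ y ∈ Ioo x₀ (x₀ + η), 0 < f' y := by
    intro y hy
    have := hmono' (left_mem_Icc.2 (by linarith)) ⟨hy.1.le, hy.2.le⟩ hy.1
    rwa [hderiv0] at this
  have hmono : StrictMonoOn f (Icc x₀ (x₀ + η)) := by
    apply strictMonoOn_of_deriv_pos (convex_Icc _ _)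
      (hfc.mono (fun y hy => Set.mem_Ici.2 (le_of_lt (hIcc hy))))
    intro y hy
    rw [interior_Icc] at hy
    rw [((hf' y (lt_trans hx₀pos hy.1)).deriv)]
    exact hf'pos y hy
  have : f x₀ < f (x₀ + η) :=
    hmono (left_mem_Icc.2 (by linarith)) (right_mem_Icc.2 (by linarith)) (by linarith)
  have : f (x₀ + η) ≤ f x₀ := hx₀max ⟨by linarith, hηX⟩
  linarith
lemma sign_pos_aux {a b φp ρp gc φx ρx : ℝ} (ha : 0 < a) (hb : 0 < b)
    (hcomp : a * ρp = b * φp) (hgc : a / b < gc)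
    (hceq : φx - φp = gc * (ρx - ρp)) (hpos : 0 < φx - φp) :
    0 < b * φx - a * ρx := by
  have hgc0 : 0 < gc := lt_trans (div_pos ha hb) hgc
  have hab : a < gc * b := by rw [div_lt_iff₀ hb] at hgc; linarith
  have hd : 0 < ρx - ρp := by nlinarith
  nlinarith [mul_pos (show 0 < b * gc - a by nlinarith) hd]

lemma sign_neg_aux {a b φp ρp gc φx ρx : ℝ} (ha : 0 < a) (hb : 0 < b)
    (hcomp : a * ρp = b * φp) (hgc : a / b < gc)
    (hceq : φx - φp = gc * (ρx - ρp)) (hpos : φx - φp < 0) :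
    0 < a * ρx - b * φx := by
  have hgc0 : 0 < gc := lt_trans (div_pos ha hb) hgc
  have hab : a < gc * b := by rw [div_lt_iff₀ hb] at hgc; linarith
  have hd : ρx - ρp < 0 := by nlinarith
  nlinarith [mul_pos (show 0 < b * gc - a by nlinarith) (neg_pos.2 hd)]

lemma range_lower_aux {a b ρp δ₀ gc ρx φd : ℝ} (ha : 0 < a) (hb : 0 < b) (hρp : 0 < ρp)
    (hδ : δ₀ = a * ρp / (2 * b)) (hgc : a / b < gc)
    (hceq : φd = gc * (ρx - ρp)) (hlow : -δ₀ ≤ φd) : ρp / 2 ≤ ρx := by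
  by_contra h
  push_neg at h
  have hd : ρx - ρp < -(ρp / 2) := by linarith
  have h1 : gc * (ρx - ρp) < a / b * (ρx - ρp) := by nlinarith
  have h2 : a / b * (ρx - ρp) ≤ a / b * (-(ρp / 2)) :=
    mul_le_mul_of_nonneg_left hd.le (by positivity)
  have h3 : a / b * (-(ρp / 2)) = -δ₀ := by rw [hδ]; field_simp
  linarith
lemma range_upper_aux {a b ρp δ₀ gc ρx φd : ℝ} (ha : 0 < a) (hb : 0 < b) (hρp : 0 < ρp)
    (hδ : δ₀ = a * ρp / (2 * b)) (hgc : a / b < gc)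
    (hceq : φd = gc * (ρx - ρp)) (hhigh : φd ≤ δ₀) : ρx ≤ 2 * ρp := by
  by_contra h
  push_neg at h
  have hd : ρp < ρx - ρp := by linarith
  have h1 : a / b * (ρx - ρp) < gc * (ρx - ρp) := by nlinarith
  have h2 : a / b * ρp ≤ a / b * (ρx - ρp) :=
    mul_le_mul_of_nonneg_left hd.le (by positivity)
  have h3 : a / b * ρp = 2 * δ₀ := by rw [hδ]; field_simp
  have h4 : 0 < δ₀ := by rw [hδ]; positivity
  linarith

lemma sign2_pos_aux {a b m lam φp ρp E φx ρx : ℝ} (ha : 0 < a) (hb : 0 < b) (hm : 0 < m)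
    (hcomp : a * ρp = b * φp) (hlam2 : lam ^ 2 = b - a / m) (hba : 0 < b - a / m)
    (hE : 0 ≤ E) (hfpos : 0 < φx - φp - E) (hr : m * |ρx - ρp| ≤ |φx - φp|) :
    0 < b * φx - a * ρx - lam ^ 2 * E := by
  have hφt : 0 < φx - φp := by linarith
  rw [abs_of_pos hφt] at hr
  have h3 : m * (ρx - ρp) ≤ m * |ρx - ρp| :=
    mul_le_mul_of_nonneg_left (le_abs_self _) hm.le
  have h4 : m * (ρx - ρp) ≤ φx - φp := le_trans h3 hr
  have h5 : a * (ρx - ρp) ≤ a / m * (φx - φp) := by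
    rw [div_mul_eq_mul_div, le_div_iff₀ hm]
    nlinarith [mul_le_mul_of_nonneg_left h4 ha.le]
  rw [hlam2]
  nlinarith [mul_pos hba hfpos]

lemma sign2_neg_aux {a b m lam φp ρp E φx ρx : ℝ} (ha : 0 < a) (hb : 0 < b) (hm : 0 < m)
    (hcomp : a * ρp = b * φp) (hlam2 : lam ^ 2 = b - a / m) (hba : 0 < b - a / m)
    (hE : 0 ≤ E) (hfpos : 0 < φp - φx - E) (hr : m * |ρx - ρp| ≤ |φx - φp|) :
    0 < a * ρx - b * φx - lam ^ 2 * E := by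
  have hφt : φx - φp < 0 := by linarith
  rw [abs_of_neg hφt] at hr
  have h3 : m * (-(ρx - ρp)) ≤ m * |ρx - ρp| :=
    mul_le_mul_of_nonneg_left (neg_le_abs _) hm.le
  have h4 : φx - φp ≤ m * (ρx - ρp) := by linarith
  have h5 : a / m * (φx - φp) ≤ a * (ρx - ρp) := by
    rw [div_mul_eq_mul_div, div_le_iff₀ hm]
    nlinarith [mul_le_mul_of_nonneg_left h4 ha.le]
  rw [hlam2]
  nlinarith [mul_pos hba hfpos]


lemma boundary_le {f B : ℝ → ℝ} (hf : ContinuousWithinAt f (Set.Ici 0) 0)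
    (hB : ContinuousWithinAt B (Set.Ici 0) 0)
    (h : ∀ x : ℝ, 0 < x → |f x| ≤ B x) : |f 0| ≤ B 0 := by
  have h1 : Tendsto (fun y => |f y|) (𝓝[>] (0:ℝ)) (𝓝 |f 0|) :=
    (continuous_abs.continuousAt.tendsto.comp (hf.mono Ioi_subset_Ici_self))
  have h2 : Tendsto B (𝓝[>] (0:ℝ)) (𝓝 (B 0)) := hB.mono Ioi_subset_Ici_self
  exact le_of_tendsto_of_tendsto h1 h2
    (eventually_nhdsWithin_of_forall (fun y hy => h y hy))

lemma boundary_eq {f h : ℝ → ℝ} (hf : ContinuousWithinAt f (Set.Ici 0) 0)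
    (hh : ContinuousWithinAt h (Set.Ici 0) 0)
    (he : ∀ x : ℝ, 0 < x → f x = h x) : f 0 = h 0 := by
  have h1 : Tendsto f (𝓝[>] (0:ℝ)) (𝓝 (f 0)) := hf.mono Ioi_subset_Ici_self
  have h2 : Tendsto f (𝓝[>] (0:ℝ)) (𝓝 (h 0)) := by
    apply Tendsto.congr' _ (hh.mono Ioi_subset_Ici_self)
    filter_upwards [self_mem_nhdsWithin] with y hy
    exact (he y hy).symm
  exact tendsto_nhds_unique h1 h2

lemma quot_bound {μ ρx w qx q₀ r₂ B : ℝ} (hμ : 0 < μ) (hρ2 : ρx ≤ r₂) (hρ0 : 0 ≤ ρx)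
    (hw : |w| ≤ B) (hq : q₀ ≤ qx) (hq₀ : 0 < q₀) (hB : 0 ≤ B) :
    |μ * ρx * w / qx| ≤ μ * r₂ * B / q₀ := by
  have hqx : 0 < qx := lt_of_lt_of_le hq₀ hq
  have hr₂0 : 0 ≤ r₂ := le_trans hρ0 hρ2
  rw [abs_div, abs_mul, abs_mul, abs_of_pos hμ, abs_of_nonneg hρ0, abs_of_pos hqx]
  apply div_le_div₀ (by positivity) ?_ hq₀ hq
  exact mul_le_mul (mul_le_mul le_rfl hρ2 hρ0 hμ.le) hw (abs_nonneg _)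
    (mul_nonneg hμ.le hr₂0)

lemma expr_bound {μ q₀ r₂ Mq Mq' Cρ1 Cφ1 Cφ2 δ₀ E ρx w1 w2 r1v qx q'x : ℝ}
    (hμ : 0 < μ) (hq₀ : 0 < q₀) (hE : 0 ≤ E) (hδ : 0 ≤ δ₀)
    (hCρ1 : 0 ≤ Cρ1) (hCφ1 : 0 ≤ Cφ1) (hCφ2 : 0 ≤ Cφ2)
    (hMq : 0 ≤ Mq) (hMq' : 0 ≤ Mq') (hr₂ : 0 ≤ r₂)
    (hρ0 : 0 ≤ ρx) (hρ2 : ρx ≤ r₂)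
    (hq : q₀ ≤ qx) (hqM : |qx| ≤ Mq) (hq' : |q'x| ≤ Mq')
    (hw1 : |w1| ≤ Cφ1 * δ₀) (hw2 : |w2| ≤ Cφ2 * E)
    (hr1 : |r1v| ≤ Cρ1 * E) :
    |((μ * r1v * w1 + μ * ρx * w2) * qx - μ * ρx * w1 * (q'x * r1v)) / qx ^ 2| ≤
      ((μ * (Cρ1 * Cφ1 * δ₀ + r₂ * Cφ2) * Mq + μ * r₂ * Cφ1 * Mq' * Cρ1 * δ₀) / q₀ ^ 2) * E := by
  have hqx : 0 < qx := lt_of_lt_of_le hq₀ hq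
  have h1 : |r1v| * |w1| ≤ Cρ1 * E * (Cφ1 * δ₀) :=
    mul_le_mul hr1 hw1 (abs_nonneg _) (by positivity)
  have h2 : |ρx| * |w2| ≤ r₂ * (Cφ2 * E) :=
    mul_le_mul (by rwa [abs_of_nonneg hρ0]) hw2 (abs_nonneg _) hr₂
  have h3 : |ρx| * |w1| ≤ r₂ * (Cφ1 * δ₀) :=
    mul_le_mul (by rwa [abs_of_nonneg hρ0]) hw1 (abs_nonneg _) hr₂
  have h4 : |q'x| * |r1v| ≤ Mq' * (Cρ1 * E) :=
    mul_le_mul hq' hr1 (abs_nonneg _) hMq'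
  have e1 : |μ * r1v * w1| = μ * (|r1v| * |w1|) := by
    rw [abs_mul, abs_mul, abs_of_pos hμ, mul_assoc]
  have e2 : |μ * ρx * w2| = μ * (|ρx| * |w2|) := by
    rw [abs_mul, abs_mul, abs_of_pos hμ, mul_assoc]
  have hT1 : |(μ * r1v * w1 + μ * ρx * w2) * qx| ≤
      μ * (Cρ1 * Cφ1 * δ₀ + r₂ * Cφ2) * Mq * E := by
    rw [abs_mul]
    have h5 : |μ * r1v * w1 + μ * ρx * w2| ≤ μ * (Cρ1 * Cφ1 * δ₀ * E + r₂ * Cφ2 * E) := by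
      calc |μ * r1v * w1 + μ * ρx * w2| ≤ |μ * r1v * w1| + |μ * ρx * w2| := abs_add_le _ _
        _ = μ * (|r1v| * |w1|) + μ * (|ρx| * |w2|) := by rw [e1, e2]
        _ ≤ μ * (Cρ1 * E * (Cφ1 * δ₀)) + μ * (r₂ * (Cφ2 * E)) := by
            have := mul_le_mul_of_nonneg_left h1 hμ.le
            have := mul_le_mul_of_nonneg_left h2 hμ.le
            linarith
        _ = μ * (Cρ1 * Cφ1 * δ₀ * E + r₂ * Cφ2 * E) := by ring
    calc |μ * r1v * w1 + μ * ρx * w2| * |qx|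
        ≤ (μ * (Cρ1 * Cφ1 * δ₀ * E + r₂ * Cφ2 * E)) * Mq := by
          apply mul_le_mul h5 hqM (abs_nonneg _) (by positivity)
      _ = μ * (Cρ1 * Cφ1 * δ₀ + r₂ * Cφ2) * Mq * E := by ring
  have hT2 : |μ * ρx * w1 * (q'x * r1v)| ≤ μ * r₂ * Cφ1 * Mq' * Cρ1 * δ₀ * E := by
    have e3 : |μ * ρx * w1 * (q'x * r1v)| = μ * (|ρx| * |w1|) * (|q'x| * |r1v|) := by
      rw [abs_mul, abs_mul, abs_mul, abs_mul, abs_of_pos hμ]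
      ring
    rw [e3]
    calc μ * (|ρx| * |w1|) * (|q'x| * |r1v|)
        ≤ μ * (r₂ * (Cφ1 * δ₀)) * (Mq' * (Cρ1 * E)) := by
          apply mul_le_mul (mul_le_mul_of_nonneg_left h3 hμ.le) h4
            (mul_nonneg (abs_nonneg _) (abs_nonneg _)) (by positivity)
      _ = μ * r₂ * Cφ1 * Mq' * Cρ1 * δ₀ * E := by ring
  have hnum : |(μ * r1v * w1 + μ * ρx * w2) * qx - μ * ρx * w1 * (q'x * r1v)| ≤
      (μ * (Cρ1 * Cφ1 * δ₀ + r₂ * Cφ2) * Mq + μ * r₂ * Cφ1 * Mq' * Cρ1 * δ₀) * E := by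
    calc |(μ * r1v * w1 + μ * ρx * w2) * qx - μ * ρx * w1 * (q'x * r1v)|
        ≤ |(μ * r1v * w1 + μ * ρx * w2) * qx| + |μ * ρx * w1 * (q'x * r1v)| := abs_sub _ _
      _ ≤ μ * (Cρ1 * Cφ1 * δ₀ + r₂ * Cφ2) * Mq * E + μ * r₂ * Cφ1 * Mq' * Cρ1 * δ₀ * E := by
          linarith
      _ = (μ * (Cρ1 * Cφ1 * δ₀ + r₂ * Cφ2) * Mq + μ * r₂ * Cφ1 * Mq' * Cρ1 * δ₀) * E := by
          ring
  rw [abs_div, abs_of_pos (by positivity : (0:ℝ) < qx ^ 2), div_mul_eq_mul_div]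
  apply div_le_div₀ (by positivity) hnum (by positivity)
  exact pow_le_pow_left₀ hq₀.le hq 2


end Auxiliary

set_option maxHeartbeats 4000000 in
/-- Exponential decay of the stationary solution: there are `C, λ, δ₀ > 0` depending only
on `ρ₊, a, b, μ, p` (independent of `φ₋ - φ₊`) such that if `|φ₋ - φ₊| ≤ δ₀` then any
classical stationary solution is twice differentiable (one-sidedly on `[0,∞)`) and
`|ρ̄'| + |ρ̄''| + |φ̄'| + |φ̄''| + |ρ̄ - ρ₊| + |φ̄ - φ₊| ≤ C e^{-λ x} |φ₋ - φ₊|` on `[0,∞)`. -/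
theorem stmt1 (p : ℝ → ℝ) (μ a b ρp φp : ℝ)
    (hμ : 0 < μ) (ha : 0 < a) (hb : 0 < b)
    (hp3 : ContDiffOn ℝ 3 p (Set.Ioi 0))
    (hp' : ∀ ρ : ℝ, 0 < ρ → a * μ / b * ρ < deriv p ρ)
    (hρp : 0 < ρp) (hφp : 0 < φp) (hcomp : a * ρp = b * φp) :
    ∃ C > 0, ∃ lam > 0, ∃ δ₀ > 0, ∀ φm : ℝ, φm ≠ φp → CondPlus p μ ρp φp φm →
      |φm - φp| ≤ δ₀ →
      ∀ ρb φb : ℝ → ℝ, IsStatSol p μ a b ρp φp φm ρb φb →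
        (∀ x ∈ Set.Ici (0:ℝ),
          DifferentiableWithinAt ℝ ρb (Set.Ici 0) x ∧
          DifferentiableWithinAt ℝ (derivWithin ρb (Set.Ici 0)) (Set.Ici 0) x ∧
          DifferentiableWithinAt ℝ φb (Set.Ici 0) x ∧
          DifferentiableWithinAt ℝ (derivWithin φb (Set.Ici 0)) (Set.Ici 0) x) ∧
        (∀ x : ℝ, 0 ≤ x →
          |derivWithin ρb (Set.Ici 0) x| +
          |derivWithin (derivWithin ρb (Set.Ici 0)) (Set.Ici 0) x| +
          |derivWithin φb (Set.Ici 0) x| +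
          |derivWithin (derivWithin φb (Set.Ici 0)) (Set.Ici 0) x| +
          |ρb x - ρp| + |φb x - φp| ≤ C * Real.exp (-lam * x) * |φm - φp|) := by
  have hqpos : ∀ s : ℝ, 0 < s → 0 < deriv p s := fun s hs =>
    lt_trans (by positivity) (hp' s hs)
  have hq2 : ContDiffOn ℝ 2 (deriv p) (Ioi 0) :=
    hp3.deriv_of_isOpen isOpen_Ioi (by norm_num)
  have hqc : ContinuousOn (deriv p) (Ioi 0) := hq2.continuousOn
  have hq'1 : ContDiffOn ℝ 1 (deriv (deriv p)) (Ioi 0) :=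
    hq2.deriv_of_isOpen isOpen_Ioi (by norm_num)
  have hq'c : ContinuousOn (deriv (deriv p)) (Ioi 0) := hq'1.continuousOn
  set g : ℝ → ℝ := fun s => deriv p s / (μ * s) with hgdef
  have hgc : ContinuousOn g (Ioi 0) := by
    apply hqc.div (continuousOn_const.mul continuousOn_id)
    intro s hs
    have : (0:ℝ) < s := hs
    exact mul_ne_zero hμ.ne' this.ne'
  have hgab : ∀ s : ℝ, 0 < s → a / b < g s := by
    intro s hs
    rw [hgdef]
    simp only
    rw [div_lt_div_iff₀ hb (by positivity)]
    have he : a * μ / b * s * b = a * (μ * s) := by field_simp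
    nlinarith [mul_lt_mul_of_pos_right (hp' s hs) hb]
  have hgpos : ∀ s : ℝ, 0 < s → 0 < g s := fun s hs =>
    lt_trans (div_pos ha hb) (hgab s hs)
  -- derivative of F
  have hFderiv : ∀ s : ℝ, 0 < s → HasDerivAt (Ffun p μ ρp) (g s) s := by
    intro s hs
    have hsub : Set.uIcc ρp s ⊆ Ioi 0 := fun τ hτ =>
      lt_of_lt_of_le (lt_min hρp hs) hτ.1
    have hint : IntervalIntegrable (fun τ => deriv p τ / (μ * τ)) volume ρp s :=
      (hgc.mono hsub).intervalIntegrable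
    have hmeas : StronglyMeasurableAtFilter (fun τ => deriv p τ / (μ * τ)) (𝓝 s) :=
      hgc.stronglyMeasurableAtFilter isOpen_Ioi s hs
    have hcont : ContinuousAt (fun τ => deriv p τ / (μ * τ)) s :=
      hgc.continuousAt (isOpen_Ioi.mem_nhds hs)
    exact intervalIntegral.integral_hasDerivAt_right hint hmeas hcont
  have hF0 : Ffun p μ ρp ρp = 0 := intervalIntegral.integral_same
  -- MVT representation of F
  have hFval : ∀ s : ℝ, 0 < s → ∃ c : ℝ,
      (min ρp s ≤ c ∧ c ≤ max ρp s ∧ 0 < c) ∧ Ffun p μ ρp s = g c * (s - ρp) := by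
    intro s hs
    rcases lt_trichotomy ρp s with h | h | h
    · obtain ⟨c, hc, hceq⟩ := exists_hasDerivAt_eq_slope (Ffun p μ ρp) g h
        (fun t ht => (hFderiv t (lt_of_lt_of_le hρp ht.1)).continuousAt.continuousWithinAt)
        (fun t ht => hFderiv t (lt_trans hρp ht.1))
      refine ⟨c, ⟨le_trans (min_le_left _ _) hc.1.le,
        le_trans hc.2.le (le_max_right _ _), lt_trans hρp hc.1⟩, ?_⟩
      rw [hF0] at hceq
      have hne : s - ρp ≠ 0 := by linarith [hc.1, hc.2]
      rw [hceq, sub_zero, div_mul_cancel₀ _ hne]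
    · exact ⟨ρp, ⟨min_le_left _ _, by rw [← h]; exact le_max_left _ _, hρp⟩,
        by rw [← h, hF0]; ring⟩
    · obtain ⟨c, hc, hceq⟩ := exists_hasDerivAt_eq_slope (Ffun p μ ρp) g h
        (fun t ht => (hFderiv t (lt_of_lt_of_le hs ht.1)).continuousAt.continuousWithinAt)
        (fun t ht => hFderiv t (lt_trans hs ht.1))
      refine ⟨c, ⟨le_trans (min_le_right _ _) hc.1.le,
        le_trans hc.2.le (le_max_left _ _), lt_trans hs hc.1⟩, ?_⟩
      rw [hF0] at hceq
      -- hceq : g c = (0 - Ffun p μ ρp s) / (ρp - s)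
      have hne : ρp - s ≠ 0 := by linarith
      field_simp at hceq
      linarith [hceq]
  -- constants
  set r₁ : ℝ := ρp / 2 with hr₁def
  set r₂ : ℝ := 2 * ρp with hr₂def
  have hr₁pos : 0 < r₁ := by rw [hr₁def]; linarith
  have hr₁₂ : r₁ ≤ r₂ := by rw [hr₁def, hr₂def]; linarith
  have hIccsub : Icc r₁ r₂ ⊆ Ioi 0 := fun s hs => lt_of_lt_of_le hr₁pos hs.1
  obtain ⟨τ₀, hτ₀mem, hτ₀min⟩ := isCompact_Icc.exists_isMinOn (nonempty_Icc.2 hr₁₂)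
    (hgc.mono hIccsub)
  set m : ℝ := g τ₀ with hmdef
  have hm_lb : ∀ s ∈ Icc r₁ r₂, m ≤ g s := fun s hs => hτ₀min hs
  have hm_ab : a / b < m := hgab τ₀ (hIccsub hτ₀mem)
  have hm_pos : 0 < m := lt_trans (div_pos ha hb) hm_ab
  have hba : 0 < b - a / m := by
    rw [sub_pos, div_lt_iff₀ hm_pos]
    rw [div_lt_iff₀ hb] at hm_ab
    linarith
  obtain ⟨Mq, hMq⟩ := isCompact_Icc.exists_bound_of_continuousOn (hqc.mono hIccsub)
  obtain ⟨Mq', hMq'⟩ := isCompact_Icc.exists_bound_of_continuousOn (hq'c.mono hIccsub)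
  have hMqpos : 0 ≤ Mq := le_trans (norm_nonneg _) (hMq r₁ (left_mem_Icc.2 hr₁₂))
  have hMq'pos : 0 ≤ Mq' := le_trans (norm_nonneg _) (hMq' r₁ (left_mem_Icc.2 hr₁₂))
  set lam : ℝ := Real.sqrt (b - a / m) with hlamdef
  have hlampos : 0 < lam := Real.sqrt_pos.2 hba
  have hlam2 : lam ^ 2 = b - a / m := Real.sq_sqrt hba.le
  set δ₀ : ℝ := a * ρp / (2 * b) with hδ₀def
  have hδ₀pos : 0 < δ₀ := by rw [hδ₀def]; positivity
  set q₀ : ℝ := a * μ * r₁ / b with hq₀def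
  have hq₀pos : 0 < q₀ := by rw [hq₀def]; positivity
  have hq₀le : ∀ s ∈ Icc r₁ r₂, q₀ ≤ deriv p s := by
    intro s hs
    have h1 := hp' s (hIccsub hs)
    have h2 : a * μ / b * r₁ ≤ a * μ / b * s := by
      apply mul_le_mul_of_nonneg_left hs.1 (by positivity)
    rw [hq₀def]
    calc a * μ * r₁ / b = a * μ / b * r₁ := by ring
    _ ≤ a * μ / b * s := h2
    _ ≤ deriv p s := h1.le
  set Cφ2 : ℝ := b + a / m with hCφ2def
  have hCφ2pos : 0 < Cφ2 := by rw [hCφ2def]; positivity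
  set Cφ1 : ℝ := 2 + Cφ2 with hCφ1def
  have hCφ1pos : 0 < Cφ1 := by rw [hCφ1def]; positivity
  set Cρ1 : ℝ := μ * r₂ * Cφ1 / q₀ with hCρ1def
  have hCρ1pos : 0 < Cρ1 := by rw [hCρ1def]; positivity
  set Cρ2 : ℝ := (μ * (Cρ1 * Cφ1 * δ₀ + r₂ * Cφ2) * Mq + μ * r₂ * Cφ1 * Mq' * Cρ1 * δ₀) / q₀ ^ 2
    with hCρ2def
  have hCρ2pos : 0 ≤ Cρ2 := by
    rw [hCρ2def]
    have : 0 < r₂ := by rw [hr₂def]; linarith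
    positivity
  set C : ℝ := Cφ1 + Cφ2 + Cρ1 + Cρ2 + 1 / m + 1 with hCdef
  have hCpos : 0 < C := by rw [hCdef]; positivity
  refine ⟨C, hCpos, lam, hlampos, δ₀, hδ₀pos, ?_⟩
  intro φm hφmne hcond hKδ ρb φb hsol
  -- solution facts
  obtain ⟨hρC, hφC, hρpos, heq1, heq2, hφ0, hρtop, hφtop⟩ := hsol
  set K : ℝ := |φm - φp| with hKdef
  have hK0 : 0 ≤ K := abs_nonneg _
  have hIci_nhds : ∀ x : ℝ, 0 < x → Ici (0:ℝ) ∈ 𝓝 x := fun x hx =>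
    mem_of_superset (isOpen_Ioi.mem_nhds hx) Ioi_subset_Ici_self
  have hρdiff : ∀ x : ℝ, 0 < x → DifferentiableAt ℝ ρb x := fun x hx =>
    (hρC.contDiffAt (hIci_nhds x hx)).differentiableAt one_ne_zero
  have hρd : ∀ x : ℝ, 0 < x → HasDerivAt ρb (deriv ρb x) x := fun x hx =>
    (hρdiff x hx).hasDerivAt
  have hφdiff : ∀ x : ℝ, 0 < x → DifferentiableAt ℝ φb x := fun x hx =>
    (hφC.contDiffAt (hIci_nhds x hx)).differentiableAt (by norm_num)
  have hφd : ∀ x : ℝ, 0 < x → HasDerivAt φb (deriv φb x) x := fun x hx =>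
    (hφdiff x hx).hasDerivAt
  have hφ1C : ContDiffOn ℝ 1 (deriv φb) (Ioi 0) :=
    (hφC.mono Ioi_subset_Ici_self).deriv_of_isOpen isOpen_Ioi (by norm_num)
  have hφdd : ∀ x : ℝ, 0 < x → HasDerivAt (deriv φb) (deriv (deriv φb) x) x := fun x hx =>
    (((hφ1C.differentiableOn one_ne_zero) x hx).differentiableAt
      (isOpen_Ioi.mem_nhds hx)).hasDerivAt
  have hρbcont : ContinuousOn ρb (Ici 0) := hρC.continuousOn
  have hφbcont : ContinuousOn φb (Ici 0) := hφC.continuousOn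
  -- equation 1 in explicit form
  have hpd : ∀ x : ℝ, 0 < x → HasDerivAt p (deriv p (ρb x)) (ρb x) := fun x hx =>
    ((hp3.contDiffAt (isOpen_Ioi.mem_nhds (hρpos x hx.le))).differentiableAt
      (by norm_num)).hasDerivAt
  have heq1' : ∀ x : ℝ, 0 < x → deriv p (ρb x) * deriv ρb x = μ * ρb x * deriv φb x := by
    intro x hx
    have hcomp' : HasDerivAt (fun y => p (ρb y)) (deriv p (ρb x) * deriv ρb x) x :=
      (hpd x hx).comp x (hρd x hx)
    rw [← hcomp'.deriv]
    exact heq1 x hx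
  have heqρ' : ∀ x : ℝ, 0 < x → deriv ρb x = μ * ρb x * deriv φb x / deriv p (ρb x) := by
    intro x hx
    have hne : deriv p (ρb x) ≠ 0 := ne_of_gt (hqpos _ (hρpos x hx.le))
    rw [eq_div_iff hne]
    linear_combination heq1' x hx
  -- the first integral : F (ρb x) = φb x - φp
  have hkey : ∀ x : ℝ, 0 ≤ x → Ffun p μ ρp (ρb x) = φb x - φp := by
    set H : ℝ → ℝ := fun x => Ffun p μ ρp (ρb x) - φb x with hHdef
    have hHd : ∀ x : ℝ, 0 < x → HasDerivAt H 0 x := by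
      intro x hx
      have h1 : HasDerivAt (fun y => Ffun p μ ρp (ρb y)) (g (ρb x) * deriv ρb x) x :=
        (hFderiv (ρb x) (hρpos x hx.le)).comp x (hρd x hx)
      have h2 : HasDerivAt H (g (ρb x) * deriv ρb x - deriv φb x) x := h1.sub (hφd x hx)
      convert h2 using 1
      rw [hgdef]
      simp only
      rw [heqρ' x hx]
      have hne1 : deriv p (ρb x) ≠ 0 := ne_of_gt (hqpos _ (hρpos x hx.le))
      have hne2 : μ * ρb x ≠ 0 := by
        have := hρpos x hx.le; positivity
      have hne3 : ρb x ≠ 0 := (hρpos x hx.le).ne'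
      field_simp
      ring
    have hHconst : ∀ x y : ℝ, 0 < x → x ≤ y → H y = H x := by
      intro x y hx hxy
      rcases eq_or_lt_of_le hxy with rfl | hlt
      · rfl
      have := constant_of_has_deriv_right_zero (f := H) (a := x) (b := y)
        (fun t ht => (hHd t (lt_of_lt_of_le hx ht.1)).continuousAt.continuousWithinAt)
        (fun t ht => (hHd t (lt_of_lt_of_le hx ht.1)).hasDerivWithinAt)
      exact this y (right_mem_Icc.2 hxy)
    have hHlim : Tendsto H atTop (𝓝 (0 - φp)) := by
      apply Tendsto.sub _ hφtop
      have hc : ContinuousAt (Ffun p μ ρp) ρp := (hFderiv ρp hρp).continuousAt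
      have := hc.tendsto.comp hρtop
      rwa [hF0] at this
    have hHval : ∀ x : ℝ, 0 < x → H x = -φp := by
      intro x hx
      have h1 : Tendsto H atTop (𝓝 (H x)) := by
        apply Tendsto.congr' _ tendsto_const_nhds
        filter_upwards [eventually_ge_atTop x] with y hy
        exact (hHconst x y hx hy).symm
      have h2 := tendsto_nhds_unique h1 hHlim
      rw [h2]; ring
    intro x hx
    rcases hx.eq_or_lt with rfl | hx'
    · have hc1 : ContinuousWithinAt H (Ioi 0) 0 := by
        apply ContinuousWithinAt.sub
        · exact ((hFderiv (ρb 0) (hρpos 0 le_rfl)).continuousAt.comp_continuousWithinAt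
            ((hρbcont 0 self_mem_Ici).mono Ioi_subset_Ici_self))
        · exact (hφbcont 0 self_mem_Ici).mono Ioi_subset_Ici_self
      have h2 : Tendsto H (𝓝[>] (0:ℝ)) (𝓝 (H 0)) := hc1
      have h3 : Tendsto H (𝓝[>] (0:ℝ)) (𝓝 (-φp)) := by
        apply Tendsto.congr' _ tendsto_const_nhds
        filter_upwards [self_mem_nhdsWithin] with y hy
        exact (hHval y hy).symm
      have h4 : H 0 = -φp := tendsto_nhds_unique h2 h3
      have h5 : Ffun p μ ρp (ρb 0) - φb 0 = -φp := h4
      linarith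
    · have := hHval x hx'
      have h5 : Ffun p μ ρp (ρb x) - φb x = -φp := this
      linarith
  have heq2' : ∀ x : ℝ, 0 < x → deriv (deriv φb) x = b * φb x - a * ρb x := fun x hx => by
    linarith [heq2 x hx]
  -- sign facts
  have hsign_pos : ∀ x : ℝ, 0 < x → 0 < φb x - φp → 0 < b * φb x - a * ρb x := by
    intro x hx hpos
    obtain ⟨c, ⟨_, _, hcpos⟩, hceq⟩ := hFval (ρb x) (hρpos x hx.le)
    rw [hkey x hx.le] at hceq
    exact sign_pos_aux ha hb hcomp (hgab c hcpos) hceq hpos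
  have hsign_neg : ∀ x : ℝ, 0 < x → φb x - φp < 0 → 0 < a * ρb x - b * φb x := by
    intro x hx hpos
    obtain ⟨c, ⟨_, _, hcpos⟩, hceq⟩ := hFval (ρb x) (hρpos x hx.le)
    rw [hkey x hx.le] at hceq
    exact sign_neg_aux ha hb hcomp (hgab c hcpos) hceq hpos
  have hφm : φb 0 - φp ≤ K := by rw [hφ0]; exact le_abs_self _
  have hφm' : -K ≤ φb 0 - φp := by rw [hφ0]; exact neg_abs_le _
  -- stage 1
  have hup1 : ∀ x : ℝ, 0 ≤ x → φb x - φp ≤ K := by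
    have := max_principle (f := fun x => φb x - φp - K) (f' := fun x => deriv φb x)
      (ψ := fun x => b * φb x - a * ρb x) (l := φp - φp - K)
      ((hφbcont.sub continuousOn_const).sub continuousOn_const)
      (fun x hx => ((hφd x hx).sub_const φp).sub_const K)
      hφ1C.continuousOn
      (fun x hx => by have h := hφdd x hx; rw [heq2' x hx] at h; exact h)
      (((continuousOn_const.mul (hφbcont.mono Ioi_subset_Ici_self)).sub
        (continuousOn_const.mul (hρbcont.mono Ioi_subset_Ici_self))))
      (fun x hx hf => by exact hsign_pos x hx (by linarith))
      (by linarith)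
      (by linarith)
      ((hφtop.sub_const φp).sub_const K)
    intro x hx
    have h := this x hx
    linarith
  have hdn1 : ∀ x : ℝ, 0 ≤ x → -K ≤ φb x - φp := by
    have := max_principle (f := fun x => φp - φb x - K) (f' := fun x => -deriv φb x)
      (ψ := fun x => a * ρb x - b * φb x) (l := φp - φp - K)
      ((continuousOn_const.sub hφbcont).sub continuousOn_const)
      (fun x hx => ((hφd x hx).const_sub φp).sub_const K)
      hφ1C.continuousOn.neg
      (fun x hx => by
        have h := (hφdd x hx).neg
        rw [heq2' x hx] at h
        exact h.congr_deriv (by ring))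
      (((continuousOn_const.mul (hρbcont.mono Ioi_subset_Ici_self)).sub
        (continuousOn_const.mul (hφbcont.mono Ioi_subset_Ici_self))))
      (fun x hx hf => by exact hsign_neg x hx (by linarith))
      (by linarith)
      (by linarith)
      ((tendsto_const_nhds.sub hφtop).sub_const K)
    intro x hx
    have h := this x hx
    linarith
  have habs1 : ∀ x : ℝ, 0 ≤ x → |φb x - φp| ≤ K := fun x hx =>
    abs_le.2 ⟨hdn1 x hx, hup1 x hx⟩
  -- range of ρb
  have hKδ' : K ≤ δ₀ := hKδ
  have hrange : ∀ x : ℝ, 0 ≤ x → ρb x ∈ Icc r₁ r₂ := by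
    intro x hx
    obtain ⟨c, ⟨_, _, hcpos⟩, hceq⟩ := hFval (ρb x) (hρpos x hx)
    rw [hkey x hx] at hceq
    have hgc := hgab c hcpos
    have hgcpos := hgpos c hcpos
    have hK1 := habs1 x hx
    rw [abs_le] at hK1
    constructor
    · rw [hr₁def]
      exact range_lower_aux ha hb hρp hδ₀def (hgab c hcpos) hceq (by linarith)
    · rw [hr₂def]
      exact range_upper_aux ha hb hρp hδ₀def (hgab c hcpos) hceq (by linarith)
  -- quantitative ratio
  have hρpmem : ρp ∈ Icc r₁ r₂ := ⟨by rw [hr₁def]; linarith, by rw [hr₂def]; linarith⟩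
  have hratio : ∀ x : ℝ, 0 ≤ x → m * |ρb x - ρp| ≤ |φb x - φp| := by
    intro x hx
    obtain ⟨c, ⟨hc1, hc2, hcpos⟩, hceq⟩ := hFval (ρb x) (hρpos x hx)
    rw [hkey x hx] at hceq
    have hcmem : c ∈ Icc r₁ r₂ := by
      have hr := hrange x hx
      exact ⟨le_trans (le_min hρpmem.1 hr.1) hc1, le_trans hc2 (max_le hρpmem.2 hr.2)⟩
    have hmgc := hm_lb c hcmem
    rw [hceq, abs_mul, abs_of_pos (hgpos c hcpos)]
    exact mul_le_mul_of_nonneg_right hmgc (abs_nonneg _)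
  -- exp facts
  have hexpcont : Continuous fun y : ℝ => Real.exp (-lam * y) :=
    Real.continuous_exp.comp (continuous_const.mul continuous_id)
  have hexpd : ∀ x : ℝ, HasDerivAt (fun y => K * Real.exp (-lam * y))
      (-lam * (K * Real.exp (-lam * x))) x := fun x => by
    have h : HasDerivAt (fun y => K * Real.exp (-lam * y))
        (K * (Real.exp (-lam * x) * (-lam * 1))) x :=
      (((hasDerivAt_id x).const_mul (-lam)).exp).const_mul K
    convert h using 1
    ring
  have hexp0 : Tendsto (fun y : ℝ => K * Real.exp (-lam * y)) atTop (𝓝 0) := by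
    have h1 : Tendsto (fun y : ℝ => -lam * y) atTop atBot :=
      Tendsto.const_mul_atTop_of_neg (by linarith) tendsto_id
    have h2 := (Real.tendsto_exp_atBot.comp h1).const_mul K
    simpa using h2
  have hexpnn : ∀ x : ℝ, 0 ≤ K * Real.exp (-lam * x) := fun x => by positivity
  -- stage 2
  have hup2 : ∀ x : ℝ, 0 ≤ x → φb x - φp ≤ K * Real.exp (-lam * x) := by
    have := max_principle (f := fun y => φb y - φp - K * Real.exp (-lam * y))
      (f' := fun y => deriv φb y + lam * (K * Real.exp (-lam * y)))
      (ψ := fun y => b * φb y - a * ρb y - lam ^ 2 * (K * Real.exp (-lam * y)))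
      (l := φp - φp - 0)
      ((hφbcont.sub continuousOn_const).sub ((continuous_const.mul hexpcont).continuousOn))
      (fun x hx => by
        have h := ((hφd x hx).sub_const φp).sub (hexpd x)
        exact h.congr_deriv (by ring))
      ((hφ1C.continuousOn.add
        ((continuous_const.mul (continuous_const.mul hexpcont)).continuousOn)))
      (fun x hx => by
        have h := (hφdd x hx).add ((hexpd x).const_mul lam)
        rw [heq2' x hx] at h
        exact h.congr_deriv (by ring))
      (((continuousOn_const.mul (hφbcont.mono Ioi_subset_Ici_self)).sub
        (continuousOn_const.mul (hρbcont.mono Ioi_subset_Ici_self))).sub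
        ((continuous_const.mul (continuous_const.mul hexpcont)).continuousOn))
      (fun x hx hf => by
        exact sign2_pos_aux ha hb hm_pos hcomp hlam2 hba (hexpnn x) (by linarith)
          (hratio x hx.le))
      (by simp only [neg_zero, mul_zero, Real.exp_zero, mul_one]; linarith)
      (by linarith)
      ((hφtop.sub_const φp).sub hexp0)
    intro x hx
    have h := this x hx
    linarith
  have hdn2 : ∀ x : ℝ, 0 ≤ x → -(K * Real.exp (-lam * x)) ≤ φb x - φp := by
    have := max_principle (f := fun y => φp - φb y - K * Real.exp (-lam * y))
      (f' := fun y => -deriv φb y + lam * (K * Real.exp (-lam * y)))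
      (ψ := fun y => a * ρb y - b * φb y - lam ^ 2 * (K * Real.exp (-lam * y)))
      (l := φp - φp - 0)
      ((continuousOn_const.sub hφbcont).sub ((continuous_const.mul hexpcont).continuousOn))
      (fun x hx => by
        have h := ((hφd x hx).const_sub φp).sub (hexpd x)
        exact h.congr_deriv (by ring))
      ((hφ1C.continuousOn.neg.add
        ((continuous_const.mul (continuous_const.mul hexpcont)).continuousOn)))
      (fun x hx => by
        have h := ((hφdd x hx).neg).add ((hexpd x).const_mul lam)
        rw [heq2' x hx] at h
        exact h.congr_deriv (by ring))
      (((continuousOn_const.mul (hρbcont.mono Ioi_subset_Ici_self)).sub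
        (continuousOn_const.mul (hφbcont.mono Ioi_subset_Ici_self))).sub
        ((continuous_const.mul (continuous_const.mul hexpcont)).continuousOn))
      (fun x hx hf => by
        exact sign2_neg_aux ha hb hm_pos hcomp hlam2 hba (hexpnn x) (by linarith)
          (hratio x hx.le))
      (by simp only [neg_zero, mul_zero, Real.exp_zero, mul_one]; linarith)
      (by linarith)
      ((tendsto_const_nhds.sub hφtop).sub hexp0)
    intro x hx
    have h := this x hx
    linarith
  have hdecay : ∀ x : ℝ, 0 ≤ x → |φb x - φp| ≤ K * Real.exp (-lam * x) := fun x hx =>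
    abs_le.2 ⟨hdn2 x hx, hup2 x hx⟩
  have hρdec : ∀ x : ℝ, 0 ≤ x → |ρb x - ρp| ≤ 1 / m * (K * Real.exp (-lam * x)) := by
    intro x hx
    have h1 := hratio x hx
    have h2 := hdecay x hx
    rw [one_div, inv_mul_eq_div, le_div_iff₀ hm_pos, mul_comm]
    exact le_trans h1 h2
  -- second derivative bound (interior)
  have hexpmono : ∀ x y : ℝ, x ≤ y → Real.exp (-lam * y) ≤ Real.exp (-lam * x) := by
    intro x y hxy
    apply Real.exp_le_exp.2
    have := mul_le_mul_of_nonneg_left hxy hlampos.le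
    linarith
  have hφ2bdi : ∀ x : ℝ, 0 < x →
      |deriv (deriv φb) x| ≤ Cφ2 * (K * Real.exp (-lam * x)) := by
    intro x hx
    rw [heq2' x hx]
    have h1 := hdecay x hx.le
    have h2 := hρdec x hx.le
    have heq : b * φb x - a * ρb x = b * (φb x - φp) - a * (ρb x - ρp) := by
      linear_combination -hcomp
    rw [heq, hCφ2def]
    calc |b * (φb x - φp) - a * (ρb x - ρp)|
        ≤ |b * (φb x - φp)| + |a * (ρb x - ρp)| := abs_sub _ _
      _ = b * |φb x - φp| + a * |ρb x - ρp| := by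
          rw [abs_mul, abs_mul, abs_of_pos hb, abs_of_pos ha]
      _ ≤ b * (K * Real.exp (-lam * x)) + a * (1 / m * (K * Real.exp (-lam * x))) := by
          have := mul_le_mul_of_nonneg_left h1 hb.le
          have := mul_le_mul_of_nonneg_left h2 ha.le
          linarith
      _ = (b + a / m) * (K * Real.exp (-lam * x)) := by field_simp
  -- first derivative bound (interior) by double MVT
  have hφ1bdi : ∀ x : ℝ, 0 < x →
      |deriv φb x| ≤ Cφ1 * (K * Real.exp (-lam * x)) := by
    intro x hx
    obtain ⟨ξ, hξ, hξeq⟩ := exists_hasDerivAt_eq_slope φb (deriv φb)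
      (by linarith : x < x + 1)
      (fun t ht => ((hφd t (lt_of_lt_of_le hx ht.1)).continuousAt).continuousWithinAt)
      (fun t ht => hφd t (lt_trans hx ht.1))
    obtain ⟨η, hη, hηeq⟩ := exists_hasDerivAt_eq_slope (deriv φb) (deriv (deriv φb))
      hξ.1
      (fun t ht => ((hφdd t (lt_of_lt_of_le hx ht.1)).continuousAt).continuousWithinAt)
      (fun t ht => hφdd t (lt_trans hx ht.1))
    have hξx : ξ - x ≤ 1 := by linarith [hξ.2]
    have hξx' : 0 < ξ - x := by linarith [hξ.1]
    -- deriv φb x = deriv φb ξ - (ξ - x) * deriv (deriv φb) η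
    have hrepr : deriv φb x = deriv φb ξ - (ξ - x) * deriv (deriv φb) η := by
      rw [hηeq]
      field_simp
      ring
    have hb1 : |deriv φb ξ| ≤ 2 * (K * Real.exp (-lam * x)) := by
      rw [hξeq]
      have h1 := hdecay (x + 1) (by linarith)
      have h2 := hdecay x hx.le
      have h3 := hexpmono x (x + 1) (by linarith)
      calc |(φb (x + 1) - φb x) / (x + 1 - x)| = |φb (x + 1) - φb x| := by
            norm_num
        _ = |(φb (x + 1) - φp) - (φb x - φp)| := by ring_nf
        _ ≤ |φb (x + 1) - φp| + |φb x - φp| := abs_sub _ _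
        _ ≤ 2 * (K * Real.exp (-lam * x)) := by
            have h4 : |φb (x+1) - φp| ≤ K * Real.exp (-lam * x) :=
              le_trans h1 (mul_le_mul_of_nonneg_left h3 hK0)
            linarith
    have hb2 : |(ξ - x) * deriv (deriv φb) η| ≤ Cφ2 * (K * Real.exp (-lam * x)) := by
      rw [abs_mul]
      have h5 := hφ2bdi η (lt_trans hx hη.1)
      have h6 : |deriv (deriv φb) η| ≤ Cφ2 * (K * Real.exp (-lam * x)) :=
        le_trans h5 (mul_le_mul_of_nonneg_left
          (mul_le_mul_of_nonneg_left (hexpmono x η (le_of_lt hη.1)) hK0) hCφ2pos.le)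
      have h7 : |ξ - x| ≤ 1 := by rw [abs_of_pos hξx']; exact hξx
      calc |ξ - x| * |deriv (deriv φb) η| ≤ 1 * (Cφ2 * (K * Real.exp (-lam * x))) := by
            apply mul_le_mul h7 h6 (abs_nonneg _) (by norm_num)
        _ = Cφ2 * (K * Real.exp (-lam * x)) := by ring
    rw [hrepr, hCφ1def]
    calc |deriv φb ξ - (ξ - x) * deriv (deriv φb) η|
        ≤ |deriv φb ξ| + |(ξ - x) * deriv (deriv φb) η| := abs_sub _ _
      _ ≤ 2 * (K * Real.exp (-lam * x)) + Cφ2 * (K * Real.exp (-lam * x)) := by linarith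
      _ = (2 + Cφ2) * (K * Real.exp (-lam * x)) := by ring
  -- first derivative of ρb (interior)
  have hρ1bdi : ∀ x : ℝ, 0 < x → |deriv ρb x| ≤ Cρ1 * (K * Real.exp (-lam * x)) := by
    intro x hx
    rw [heqρ' x hx]
    have h := quot_bound hμ (hrange x hx.le).2 (hρpos x hx.le).le (hφ1bdi x hx)
      (hq₀le (ρb x) (hrange x hx.le)) hq₀pos (by positivity)
    refine le_trans h (le_of_eq ?_)
    rw [hCρ1def]
    ring
  -- derivWithin layer
  set φ₁ := derivWithin φb (Set.Ici 0) with hφ₁def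
  have hφ₁C : ContDiffOn ℝ 1 φ₁ (Ici 0) :=
    hφC.derivWithin (uniqueDiffOn_Ici 0) (by norm_num)
  have hφ₁eq : ∀ x : ℝ, 0 < x → φ₁ x = deriv φb x := fun x hx => by
    rw [hφ₁def]; exact derivWithin_of_mem_nhds (hIci_nhds x hx)
  have hφ₁cont : ContinuousOn φ₁ (Ici 0) := hφ₁C.continuousOn
  set φ₂ := derivWithin φ₁ (Set.Ici 0) with hφ₂def
  have hφ₂cont : ContinuousOn φ₂ (Ici 0) :=
    hφ₁C.continuousOn_derivWithin (uniqueDiffOn_Ici 0) le_rfl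
  have hφ₂eq : ∀ x : ℝ, 0 < x → φ₂ x = deriv (deriv φb) x := by
    intro x hx
    rw [hφ₂def, derivWithin_of_mem_nhds (hIci_nhds x hx)]
    apply Filter.EventuallyEq.deriv_eq
    filter_upwards [isOpen_Ioi.mem_nhds hx] with y hy
    exact hφ₁eq y hy
  have hExpCont : ∀ c : ℝ, Continuous fun y : ℝ => c * (K * Real.exp (-lam * y)) :=
    fun c => continuous_const.mul (continuous_const.mul hexpcont)
  have hφ₁bd : ∀ x : ℝ, 0 ≤ x → |φ₁ x| ≤ Cφ1 * (K * Real.exp (-lam * x)) := by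
    intro x hx
    rcases hx.eq_or_lt with rfl | hx'
    · exact boundary_le (hφ₁cont 0 self_mem_Ici)
        ((hExpCont Cφ1).continuousWithinAt)
        (fun y hy => by rw [hφ₁eq y hy]; exact hφ1bdi y hy)
    · rw [hφ₁eq x hx']; exact hφ1bdi x hx'
  have hφ₂formula : ∀ x : ℝ, 0 ≤ x → φ₂ x = b * φb x - a * ρb x := by
    intro x hx
    rcases hx.eq_or_lt with rfl | hx'
    · exact boundary_eq (hφ₂cont 0 self_mem_Ici)
        (((continuousOn_const.mul hφbcont).sub
          (continuousOn_const.mul hρbcont)) 0 self_mem_Ici)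
        (fun y hy => by rw [hφ₂eq y hy, heq2' y hy]; rfl)
    · rw [hφ₂eq x hx', heq2' x hx']
  have hφ₂bd : ∀ x : ℝ, 0 ≤ x → |φ₂ x| ≤ Cφ2 * (K * Real.exp (-lam * x)) := by
    intro x hx
    rw [hφ₂formula x hx]
    have h1 := hdecay x hx
    have h2 := hρdec x hx
    have heq : b * φb x - a * ρb x = b * (φb x - φp) - a * (ρb x - ρp) := by
      linear_combination -hcomp
    rw [heq, hCφ2def]
    calc |b * (φb x - φp) - a * (ρb x - ρp)|
        ≤ |b * (φb x - φp)| + |a * (ρb x - ρp)| := abs_sub _ _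
      _ = b * |φb x - φp| + a * |ρb x - ρp| := by
          rw [abs_mul, abs_mul, abs_of_pos hb, abs_of_pos ha]
      _ ≤ b * (K * Real.exp (-lam * x)) + a * (1 / m * (K * Real.exp (-lam * x))) := by
          have := mul_le_mul_of_nonneg_left h1 hb.le
          have := mul_le_mul_of_nonneg_left h2 ha.le
          linarith
      _ = (b + a / m) * (K * Real.exp (-lam * x)) := by field_simp
  set ρ₁ := derivWithin ρb (Set.Ici 0) with hρ₁def
  have hρ₁eq : ∀ x : ℝ, 0 < x → ρ₁ x = deriv ρb x := fun x hx => by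
    rw [hρ₁def]; exact derivWithin_of_mem_nhds (hIci_nhds x hx)
  have hρ₁cont : ContinuousOn ρ₁ (Ici 0) :=
    hρC.continuousOn_derivWithin (uniqueDiffOn_Ici 0) le_rfl
  set G : ℝ → ℝ := fun y => μ * ρb y * φ₁ y / deriv p (ρb y) with hGdef
  have hGcont : ContinuousOn G (Ici 0) := by
    apply ContinuousOn.div ((continuousOn_const.mul hρbcont).mul hφ₁cont)
      (hqc.comp hρbcont (fun y hy => hρpos y hy))
    exact fun y hy => ne_of_gt (hqpos _ (hρpos y hy))
  have hρ₁G : ∀ x : ℝ, 0 ≤ x → ρ₁ x = G x := by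
    intro x hx
    rcases hx.eq_or_lt with rfl | hx'
    · exact boundary_eq (hρ₁cont 0 self_mem_Ici) (hGcont 0 self_mem_Ici)
        (fun y hy => by
          rw [hρ₁eq y hy, heqρ' y hy, hGdef]
          simp only
          rw [hφ₁eq y hy])
    · rw [hρ₁eq x hx', heqρ' x hx', hGdef]
      simp only
      rw [hφ₁eq x hx']
  have hρ₁bd : ∀ x : ℝ, 0 ≤ x → |ρ₁ x| ≤ Cρ1 * (K * Real.exp (-lam * x)) := by
    intro x hx
    rw [hρ₁G x hx, hGdef]
    simp only
    have h := quot_bound hμ (hrange x hx).2 (hρpos x hx).le (hφ₁bd x hx)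
      (hq₀le (ρb x) (hrange x hx)) hq₀pos (by positivity)
    refine le_trans h (le_of_eq ?_)
    rw [hCρ1def]
    ring
  -- second derivative of ρ within Ici 0
  have hqd : ∀ x : ℝ, 0 ≤ x →
      HasDerivAt (deriv p) (deriv (deriv p) (ρb x)) (ρb x) := fun x hx =>
    ((hq2.contDiffAt (isOpen_Ioi.mem_nhds (hρpos x hx))).differentiableAt
      (by norm_num)).hasDerivAt
  have hρbd : ∀ x ∈ Ici (0:ℝ), HasDerivWithinAt ρb (ρ₁ x) (Ici 0) x := fun x hx => by
    rw [hρ₁def]; exact ((hρC.differentiableOn one_ne_zero) x hx).hasDerivWithinAt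
  have hφ₁d : ∀ x ∈ Ici (0:ℝ), HasDerivWithinAt φ₁ (φ₂ x) (Ici 0) x := fun x hx => by
    rw [hφ₂def]; exact ((hφ₁C.differentiableOn one_ne_zero) x hx).hasDerivWithinAt
  set expr : ℝ → ℝ := fun x =>
    ((μ * ρ₁ x * φ₁ x + μ * ρb x * φ₂ x) * deriv p (ρb x) -
      μ * ρb x * φ₁ x * (deriv (deriv p) (ρb x) * ρ₁ x)) / deriv p (ρb x) ^ 2
    with hexprdef
  have hGd : ∀ x ∈ Ici (0:ℝ), HasDerivWithinAt G (expr x) (Ici 0) x := by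
    intro x hx
    have hN : HasDerivWithinAt (fun y => μ * ρb y * φ₁ y)
        (μ * ρ₁ x * φ₁ x + μ * ρb x * φ₂ x) (Ici 0) x := by
      have h1 : HasDerivWithinAt (fun y => μ * ρb y) (μ * ρ₁ x) (Ici 0) x :=
        (hρbd x hx).const_mul μ
      have h2 := h1.mul (hφ₁d x hx)
      exact h2
    have hD : HasDerivWithinAt (fun y => deriv p (ρb y))
        (deriv (deriv p) (ρb x) * ρ₁ x) (Ici 0) x :=
      (hqd x hx).comp_hasDerivWithinAt x (hρbd x hx)
    have h3 := hN.div hD (ne_of_gt (hqpos _ (hρpos x hx)))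
    exact h3
  have hρ₁d : ∀ x ∈ Ici (0:ℝ), HasDerivWithinAt ρ₁ (expr x) (Ici 0) x := fun x hx =>
    (hGd x hx).congr (fun y hy => hρ₁G y hy) (hρ₁G x hx)
  have hρ₂eq : ∀ x ∈ Ici (0:ℝ), derivWithin ρ₁ (Ici 0) x = expr x := fun x hx =>
    (hρ₁d x hx).derivWithin (uniqueDiffOn_Ici 0 x hx)
  have hρ₂bd : ∀ x : ℝ, 0 ≤ x → |expr x| ≤ Cρ2 * (K * Real.exp (-lam * x)) := by
    intro x hx
    rw [hexprdef]
    simp only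
    have hρmem := hrange x hx
    have hw1 : |φ₁ x| ≤ Cφ1 * δ₀ := by
      refine le_trans (hφ₁bd x hx) ?_
      have h1 : K * Real.exp (-lam * x) ≤ δ₀ * 1 := by
        apply mul_le_mul hKδ' (Real.exp_le_one_iff.2 (by nlinarith)) (Real.exp_pos _).le
          hδ₀pos.le
      apply mul_le_mul_of_nonneg_left (by linarith) hCφ1pos.le
    have h := expr_bound (r₂ := r₂) hμ hq₀pos (by positivity) hδ₀pos.le hCρ1pos.le
      hCφ1pos.le hCφ2pos.le hMqpos hMq'pos (by rw [hr₂def]; positivity)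
      (hρpos x hx).le hρmem.2 (hq₀le (ρb x) hρmem)
      (hMq (ρb x) hρmem) (hMq' (ρb x) hρmem) hw1 (hφ₂bd x hx) (hρ₁bd x hx)
    refine le_trans h (le_of_eq ?_)
    rw [hCρ2def]
  -- final assembly
  have hfinal : ∀ x : ℝ, 0 ≤ x →
      |ρ₁ x| + |derivWithin ρ₁ (Set.Ici 0) x| + |φ₁ x| + |φ₂ x| +
        |ρb x - ρp| + |φb x - φp| ≤ C * Real.exp (-lam * x) * K := by
    intro x hx
    rw [hρ₂eq x hx]
    have b1 := hρ₁bd x hx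
    have b2 := hρ₂bd x hx
    have b3 := hφ₁bd x hx
    have b4 := hφ₂bd x hx
    have b5 := hρdec x hx
    have b6 := hdecay x hx
    have hCe : C * Real.exp (-lam * x) * K =
        Cρ1 * (K * Real.exp (-lam * x)) + Cρ2 * (K * Real.exp (-lam * x)) +
        Cφ1 * (K * Real.exp (-lam * x)) + Cφ2 * (K * Real.exp (-lam * x)) +
        1 / m * (K * Real.exp (-lam * x)) + K * Real.exp (-lam * x) := by
      rw [hCdef]; ring
    rw [hCe]
    linarith
  constructor
  · intro x hx
    exact ⟨(hρC.differentiableOn one_ne_zero) x hx, (hρ₁d x hx).differentiableWithinAt,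
      (hφC.differentiableOn (by norm_num)) x hx, (hφ₁d x hx).differentiableWithinAt⟩
  · intro x hx
    exact hfinal x hx

end
end

section
/- There exists a unique constant ρ₋ > 0 such that F(ρ₋) = φ₋ − φ₊. Moreover ρ₋ > ρ₊ if and only if φ₋ > φ₊, and ρ₋ < ρ₊ if and only if φ₋ < φ₊. -/
open MeasureTheory Set Filter Topology

noncomputable section

/-- There exists a unique `ρ₋ > 0` with `F(ρ₋) = φ₋ - φ₊`; moreover `ρ₋ > ρ₊ ↔ φ₋ > φ₊`
and `ρ₋ < ρ₊ ↔ φ₋ < φ₊`. -/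
theorem stmt4 (p : ℝ → ℝ) (μ a b ρp φp φm : ℝ)
    (hμ : 0 < μ) (ha : 0 < a) (hb : 0 < b)
    (hp3 : ContDiffOn ℝ 3 p (Set.Ioi 0))
    (hp' : ∀ ρ : ℝ, 0 < ρ → a * μ / b * ρ < deriv p ρ)
    (hρp : 0 < ρp) (hφp : 0 < φp) (hcomp : a * ρp = b * φp)
    (hne : φm ≠ φp) (hint : CondPlus p μ ρp φp φm) :
    (∃! ρm : ℝ, 0 < ρm ∧ Ffun p μ ρp ρm = φm - φp) ∧
    (∀ ρm : ℝ, 0 < ρm → Ffun p μ ρp ρm = φm - φp →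
      ((ρp < ρm ↔ φp < φm) ∧ (ρm < ρp ↔ φm < φp))) := by
  set f : ℝ → ℝ := fun τ => deriv p τ / (μ * τ) with hf
  set t : ℝ := φm - φp with htdef
  have hF : ∀ s, Ffun p μ ρp s = ∫ τ in ρp..s, f τ := fun s => rfl
  have hab : (0:ℝ) < a / b := div_pos ha hb
  have hcd : ContinuousOn (deriv p) (Ioi 0) :=
    hp3.continuousOn_deriv_of_isOpen isOpen_Ioi (by norm_num)
  have hfc : ContinuousOn f (Ioi 0) :=
    hcd.div (continuousOn_const.mul continuousOn_id)
      (fun x hx => ne_of_gt (mul_pos hμ hx))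
  have hfpos : ∀ x : ℝ, 0 < x → a / b < f x := by
    intro x hx
    have h2 : a * μ / b * x / (μ * x) < deriv p x / (μ * x) :=
      (div_lt_div_iff_of_pos_right (mul_pos hμ hx)).mpr (hp' x hx)
    have h3 : a * μ / b * x / (μ * x) = a / b := by
      field_simp
    rw [h3] at h2
    exact h2
  have hfpos' : ∀ x : ℝ, 0 < x → 0 < f x := fun x hx => hab.trans (hfpos x hx)
  have hintg : ∀ s1 s2 : ℝ, 0 < s1 → 0 < s2 → IntervalIntegrable f volume s1 s2 := by
    intro s1 s2 h1 h2
    apply (hfc.mono ?_).intervalIntegrable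
    intro x hx
    exact lt_of_lt_of_le (lt_min h1 h2) hx.1
  have hderivF : ∀ s : ℝ, 0 < s → HasDerivAt (Ffun p μ ρp) (f s) s := by
    intro s hs
    exact intervalIntegral.integral_hasDerivAt_right (hintg ρp s hρp hs)
      (hfc.stronglyMeasurableAtFilter isOpen_Ioi s hs)
      (hfc.continuousAt (Ioi_mem_nhds hs))
  have hFcont : ∀ s : ℝ, 0 < s → ContinuousAt (Ffun p μ ρp) s :=
    fun s hs => (hderivF s hs).continuousAt
  have hFρp : Ffun p μ ρp ρp = 0 := intervalIntegral.integral_same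
  have hadd : ∀ s1 s2 : ℝ, 0 < s1 → 0 < s2 →
      Ffun p μ ρp s1 + ∫ τ in s1..s2, f τ = Ffun p μ ρp s2 := by
    intro s1 s2 h1 h2
    exact intervalIntegral.integral_add_adjacent_intervals (hintg ρp s1 hρp h1)
      (hintg s1 s2 h1 h2)
  have hFmono : ∀ s1 s2 : ℝ, 0 < s1 → s1 < s2 → Ffun p μ ρp s1 < Ffun p μ ρp s2 := by
    intro s1 s2 h1 h12
    have hpos : 0 < ∫ τ in s1..s2, f τ :=
      intervalIntegral.intervalIntegral_pos_of_pos_on (hintg s1 s2 h1 (h1.trans h12))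
        (fun x hx => hfpos' x (h1.trans hx.1)) h12
    linarith [hadd s1 s2 h1 (h1.trans h12)]
  -- growth at infinity
  have hgrow : ∀ s : ℝ, ρp ≤ s → a / b * (s - ρp) ≤ Ffun p μ ρp s := by
    intro s hs
    have hs0 : 0 < s := hρp.trans_le hs
    have h1 : ∫ τ in ρp..s, (a/b : ℝ) ≤ ∫ τ in ρp..s, f τ := by
      apply intervalIntegral.integral_mono_on hs
        (intervalIntegrable_const) (hintg ρp s hρp hs0)
      intro x hx
      exact (hfpos x (hρp.trans_le hx.1)).le
    rw [intervalIntegral.integral_const, smul_eq_mul] at h1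
    rw [hF]
    linarith
  -- existence
  have hexist : ∃ c : ℝ, 0 < c ∧ Ffun p μ ρp c = t := by
    rcases lt_or_gt_of_ne (sub_ne_zero.mpr hne) with ht | ht
    all_goals have ht' := ht
    · -- t < 0 : need small α with F α ≤ t
      have hα : ∃ α : ℝ, 0 < α ∧ α < ρp ∧ Ffun p μ ρp α ≤ t := by
        by_contra hcon
        push_neg at hcon
        set α : ℕ → ℝ := fun n => ρp / (n + 2) with hαdef
        have hα0 : ∀ n, 0 < α n := fun n => div_pos hρp (by positivity)
        have hαlt : ∀ n, α n < ρp := by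
          intro n
          rw [hαdef]
          rw [div_lt_iff₀ (by positivity)]
          nlinarith [hρp, (Nat.cast_nonneg n : (0:ℝ) ≤ n)]
        have hαtend : Tendsto α atTop (𝓝 0) := by
          apply Tendsto.div_atTop tendsto_const_nhds
          exact tendsto_atTop_add_const_right _ _ tendsto_natCast_atTop_atTop
        have hbound : ∀ n, ∫ x in Ioc (α n) ρp, f x ≤ -t := by
          intro n
          have h1 := hcon (α n) (hα0 n) (hαlt n)
          have h2 : Ffun p μ ρp (α n) = - ∫ τ in (α n)..ρp, f τ := by
            rw [hF, intervalIntegral.integral_symm]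
          rw [intervalIntegral.integral_of_le (hαlt n).le] at h2
          linarith
        have hIoc : IntegrableOn f (Ioc 0 ρp) := by
          apply MeasureTheory.integrableOn_Ioc_of_intervalIntegral_norm_bounded_left
            (I := -t) (a := α) (l := atTop)
            (fun n => (hintg (α n) ρp (hα0 n) hρp).1) hαtend
          filter_upwards with n
          have : ∫ x in Ioc (α n) ρp, ‖f x‖ = ∫ x in Ioc (α n) ρp, f x := by
            apply setIntegral_congr_fun measurableSet_Ioc
            intro x hx
            exact Real.norm_of_nonneg (hfpos' x ((hα0 n).trans hx.1)).le
          rw [this]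
          exact hbound n
        have hIoo : IntegrableOn f (Ioo 0 ρp) := hIoc.mono_set Ioo_subset_Ioc_self
        rcases hint with hni | hip
        · exact hni hIoo
        · -- integrable case: show integral ≤ -t, contradiction with 0 < t + I
          have hmono : Monotone (fun n => Ioo (α n) ρp) := by
            intro n m hnm
            apply Ioo_subset_Ioo_left
            rw [hαdef]
            apply div_le_div_of_nonneg_left hρp.le (by positivity)
            have : (n:ℝ) ≤ m := Nat.cast_le.mpr hnm
            linarith
          have hunion : (⋃ n, Ioo (α n) ρp) = Ioo 0 ρp := by
            apply Subset.antisymm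
            · exact iUnion_subset fun n => Ioo_subset_Ioo_left (hα0 n).le
            · intro x hx
              obtain ⟨n, hn⟩ := (hαtend.eventually (gt_mem_nhds hx.1)).exists
              exact mem_iUnion.mpr ⟨n, hn, hx.2⟩
          have htend := tendsto_setIntegral_of_monotone
            (fun n => measurableSet_Ioo) hmono (hunion ▸ hIoo)
          rw [hunion] at htend
          have hle : ∫ x in Ioo 0 ρp, f x ≤ -t := by
            apply le_of_tendsto htend
            filter_upwards with n
            rw [← integral_Ioc_eq_integral_Ioo]
            exact hbound n
          rw [← htdef] at hip
          simp only [hf] at hle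
          linarith
      obtain ⟨α, hα0, hαρ, hαle⟩ := hα
      have hcont : ContinuousOn (Ffun p μ ρp) (Icc α ρp) := fun x hx =>
        (hFcont x (hα0.trans_le hx.1)).continuousWithinAt
      have := intermediate_value_Icc hαρ.le hcont
      have hmem : t ∈ Icc (Ffun p μ ρp α) (Ffun p μ ρp ρp) := ⟨hαle, by rw [hFρp]; linarith⟩
      obtain ⟨c, hc, hceq⟩ := this hmem
      exact ⟨c, hα0.trans_le hc.1, hceq⟩
    · -- 0 < t
      set β : ℝ := ρp + b / a * t + 1 with hβdef
      have hβ : ρp ≤ β := by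
        rw [hβdef]
        nlinarith [mul_pos (div_pos hb ha) ht']
      have hβF : t ≤ Ffun p μ ρp β := by
        have := hgrow β hβ
        have h2 : a / b * (β - ρp) = t + a / b := by
          rw [hβdef]
          field_simp
          ring
        linarith
      have hcont : ContinuousOn (Ffun p μ ρp) (Icc ρp β) := fun x hx =>
        (hFcont x (hρp.trans_le hx.1)).continuousWithinAt
      have hmem : t ∈ Icc (Ffun p μ ρp ρp) (Ffun p μ ρp β) := ⟨by rw [hFρp]; linarith, hβF⟩
      obtain ⟨c, hc, hceq⟩ := intermediate_value_Icc hβ hcont hmem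
      exact ⟨c, hρp.trans_le hc.1, hceq⟩
  obtain ⟨c, hc0, hceq⟩ := hexist
  have huniq : ∀ x y : ℝ, 0 < x → 0 < y → Ffun p μ ρp x = t → Ffun p μ ρp y = t → x = y := by
    intro x y hx hy hxe hye
    rcases lt_trichotomy x y with h | h | h
    · have := hFmono x y hx h; rw [hxe, hye] at this; linarith
    · exact h
    · have := hFmono y x hy h; rw [hxe, hye] at this; linarith
  constructor
  · exact ⟨c, ⟨hc0, hceq⟩, fun y hy => huniq y c hy.1 hc0 hy.2 hceq⟩
  · intro ρm hρm hFeq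
    constructor
    · constructor
      · intro h
        have := hFmono ρp ρm hρp h
        rw [hFρp, hFeq] at this
        linarith
      · intro h
        rcases lt_trichotomy ρp ρm with h' | h' | h'
        · exact h'
        · rw [← h', hFρp] at hFeq; exfalso; linarith
        · have := hFmono ρm ρp hρm h'
          rw [hFρp, hFeq] at this
          linarith
    · constructor
      · intro h
        have := hFmono ρm ρp hρm h
        rw [hFρp, hFeq] at this
        linarith
      · intro h
        rcases lt_trichotomy ρm ρp with h' | h' | h'
        · exact h'
        · rw [h', hFρp] at hFeq; exfalso; linarith
        · have := hFmono ρp ρm hρp h'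
          rw [hFρp, hFeq] at this
          linarith

end
end

section
/- The constants satisfy |φ₋ − φ₊| ≥ (a/b)·|ρ₋ − ρ₊|. -/
open MeasureTheory Set Filter Topology

noncomputable section

lemma key_lb (p : ℝ → ℝ) (μ a b : ℝ) (hμ : 0 < μ) (ha : 0 < a) (hb : 0 < b)
    (hp3 : ContDiffOn ℝ 3 p (Set.Ioi 0))
    (hp' : ∀ ρ : ℝ, 0 < ρ → a * μ / b * ρ < deriv p ρ)
    (c d : ℝ) (hc : 0 < c) (hcd : c ≤ d) :
    a / b * (d - c) ≤ ∫ τ in c..d, deriv p τ / (μ * τ) := by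
  have hcont : ContinuousOn (fun τ => deriv p τ / (μ * τ)) (Set.Icc c d) := by
    apply ContinuousOn.div
    · exact (hp3.continuousOn_deriv_of_isOpen isOpen_Ioi (by norm_num)).mono
        (fun x hx => lt_of_lt_of_le hc hx.1)
    · exact (continuous_const.mul continuous_id).continuousOn
    · intro x hx
      exact ne_of_gt (mul_pos hμ (lt_of_lt_of_le hc hx.1))
  have hInt : IntervalIntegrable (fun τ => deriv p τ / (μ * τ)) volume c d :=
    (hcont.mono (by rw [Set.uIcc_of_le hcd])).intervalIntegrable
  have hmono : ∀ x ∈ Set.Icc c d, a / b ≤ deriv p x / (μ * x) := by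
    intro x hx
    have hx0 : 0 < x := lt_of_lt_of_le hc hx.1
    have h1 := hp' x hx0
    rw [le_div_iff₀ (mul_pos hμ hx0)]
    calc a / b * (μ * x) = a * μ / b * x := by ring
    _ ≤ deriv p x := h1.le
  calc a / b * (d - c) = ∫ _ in c..d, a / b := by
        rw [intervalIntegral.integral_const, smul_eq_mul]; ring
    _ ≤ ∫ τ in c..d, deriv p τ / (μ * τ) :=
        intervalIntegral.integral_mono_on hcd intervalIntegrable_const hInt hmono

/-- `|φ₋ - φ₊| ≥ (a/b) |ρ₋ - ρ₊|`. -/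
theorem stmt9 (p : ℝ → ℝ) (μ a b ρp φp φm ρm : ℝ)
    (hμ : 0 < μ) (ha : 0 < a) (hb : 0 < b)
    (hp3 : ContDiffOn ℝ 3 p (Set.Ioi 0))
    (hp' : ∀ ρ : ℝ, 0 < ρ → a * μ / b * ρ < deriv p ρ)
    (hρp : 0 < ρp) (hφp : 0 < φp) (hcomp : a * ρp = b * φp)
    (hne : φm ≠ φp) (hint : CondPlus p μ ρp φp φm)
    (hρm : 0 < ρm) (hFρm : Ffun p μ ρp ρm = φm - φp) :
    a / b * |ρm - ρp| ≤ |φm - φp| := by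
  rcases le_or_gt ρp ρm with h | h
  · have := key_lb p μ a b hμ ha hb hp3 hp' ρp ρm hρp h
    rw [show (∫ τ in ρp..ρm, deriv p τ / (μ * τ)) = Ffun p μ ρp ρm from rfl,
      hFρm] at this
    rw [abs_of_nonneg (by linarith)]
    calc a / b * (ρm - ρp) ≤ φm - φp := this
      _ ≤ |φm - φp| := le_abs_self _
  · have := key_lb p μ a b hμ ha hb hp3 hp' ρm ρp hρm h.le
    have hswap : (∫ τ in ρm..ρp, deriv p τ / (μ * τ)) = -(φm - φp) := by
      rw [← hFρm, Ffun, intervalIntegral.integral_symm]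
    rw [hswap] at this
    rw [abs_of_nonpos (by linarith)]
    calc a / b * -(ρm - ρp) = a / b * (ρp - ρm) := by ring
      _ ≤ -(φm - φp) := this
      _ ≤ |φm - φp| := neg_le_abs _

end
end
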